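/- For the ORFit update θ^t = θ^{t-1} - (1/(x_tᵀP_{t-1}x_t))·P_{t-1}x_t(x_tᵀθ^{t-1} - y_t), the a posteriori error vanishes: x_tᵀθ^t = y_t; moreover for every previous index i < t, x_iᵀθ^t = x_iᵀθ^{t-1}. -/

import Mathlib

open Matrix

/-- For the ORFit update
`θ^t = θ^{t-1} - (1/(x_tᵀ P x_t))·P x_t (x_tᵀθ^{t-1} - y_t)`, where `P` is the
orthogonal projection onto `Span(x_0,...,x_{t-1})^⊥` (so `P² = P`, `Pᵀ = P`,
`x_iᵀP = 0` for `i < t`), the a posteriori error vanishes: `x_tᵀθ^t = y_t`;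
moreover for every previous index `i < t`, `x_iᵀθ^t = x_iᵀθ^{t-1}`. -/
theorem orfit_update_properties {d : ℕ} (x : ℕ → Fin d → ℝ) (t : ℕ) (y : ℝ)
    (P : Matrix (Fin d) (Fin d) ℝ)
    (hsym : Pᵀ = P) (hidem : P * P = P)
    (horth : ∀ i < t, x i ᵥ* P = 0)
    (hne : x t ⬝ᵥ (P *ᵥ x t) ≠ 0)
    (θprev θnew : Fin d → ℝ)
    (hθ : θnew = θprev - ((x t ⬝ᵥ (P *ᵥ x t))⁻¹ * (x t ⬝ᵥ θprev - y)) • (P *ᵥ x t)) :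
    x t ⬝ᵥ θnew = y ∧ ∀ i < t, x i ⬝ᵥ θnew = x i ⬝ᵥ θprev := by
  subst hθ
  constructor
  · rw [dotProduct_sub, dotProduct_smul, smul_eq_mul]
    field_simp
    ring
  · intro i hi
    have h0 : x i ⬝ᵥ (P *ᵥ x t) = 0 := by
      rw [dotProduct_mulVec, horth i hi, zero_dotProduct]
    rw [dotProduct_sub, dotProduct_smul, h0, smul_eq_mul, mul_zero, sub_zero]
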